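/- Let α : [0,1] → [0,1] be the piecewise linear map defined by α(x) = x/√2 for 0 ≤ x ≤ 2−√2 and α(x) = √2 x + (1−√2) for 2−√2 < x ≤ 1. Then for all k, n ≥ 1 and all distinct dyadic rationals s, s' ∈ {a/2^n : 0 ≤ a ≤ 2^n − 1}, the fractional parts of 2^k α(s) and 2^k α(s') are distinct. -/

import Mathlib

lemma aux (c d : ℤ) (h : (c:ℝ) = (d:ℝ) * Real.sqrt 2) : d = 0 := by
  by_contra hd
  have hd' : (d:ℝ) ≠ 0 := Int.cast_ne_zero.mpr hd
  apply irrational_sqrt_two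
  refine ⟨(c:ℚ)/(d:ℚ), ?_⟩
  push_cast
  field_simp
  linarith [h]

/-- The piecewise linear homeomorphism `α` of `[0,1]`. -/
noncomputable def alphaMap : ℝ → ℝ := fun x =>
  if x ≤ 2 - Real.sqrt 2 then x / Real.sqrt 2 else Real.sqrt 2 * x + (1 - Real.sqrt 2)

theorem stmt1 (k n : ℕ) (hk : 1 ≤ k) (hn : 1 ≤ n) (a b : ℕ)
    (ha : a ≤ 2 ^ n - 1) (hb : b ≤ 2 ^ n - 1) (hab : a ≠ b) :
    Int.fract ((2 : ℝ) ^ k * alphaMap ((a : ℝ) / 2 ^ n)) ≠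
      Int.fract ((2 : ℝ) ^ k * alphaMap ((b : ℝ) / 2 ^ n)) := by
  have hs : Real.sqrt 2 * Real.sqrt 2 = 2 := Real.mul_self_sqrt (by norm_num)
  have hne : Real.sqrt 2 ≠ 0 := by positivity
  have hN : ((2:ℝ)^n) ≠ 0 := by positivity
  have hNZ : ((2:ℤ)^n) ≠ 0 := pow_ne_zero _ two_ne_zero
  have hKZ : ((2:ℤ)^k) ≠ 0 := pow_ne_zero _ two_ne_zero
  have haZ : (a:ℤ) < 2^n := by exact_mod_cast (by omega : a < 2^n)
  have hbZ : (b:ℤ) < 2^n := by exact_mod_cast (by omega : b < 2^n)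
  intro h
  rw [Int.fract_eq_fract] at h
  obtain ⟨z, hz⟩ := h
  simp only [alphaMap] at hz
  split_ifs at hz with h1 h2 h2
  · -- both left branch
    have key : (((2:ℤ)^k * a - 2^k * b : ℤ) : ℝ) = ((z * 2^n : ℤ) : ℝ) * Real.sqrt 2 := by
      push_cast
      field_simp at hz
      nlinarith [hz, hs]
    have hd := aux _ _ key
    have hz0 : z = 0 := (mul_eq_zero.mp hd).resolve_right hNZ
    have hcr : ((((2:ℤ)^k * a - 2^k * b : ℤ)) : ℝ) = 0 := by rw [key, hz0]; simp
    have hc : (2:ℤ)^k * a - 2^k * b = 0 := by exact_mod_cast hcr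
    have : (2:ℤ)^k * ((a:ℤ) - b) = 0 := by linarith
    have := (mul_eq_zero.mp this).resolve_left hKZ
    omega
  · -- a left, b right
    have key : ((((2:ℤ)^k * a - 2^k * (2*b) + 2^k * 2^(n+1)) * 2^n : ℤ) : ℝ)
        = ((((2:ℤ)^k * 2^n + z * 2^n) * 2^n : ℤ) : ℝ) * Real.sqrt 2 := by
      push_cast
      field_simp at hz
      linear_combination (2:ℝ)^n * hz + (((b:ℝ) * 2^k - 2^k * 2^n) * 2^n) * hs
    have hd := aux _ _ key
    have hcr : (((((2:ℤ)^k * a - 2^k * (2*b) + 2^k * 2^(n+1)) * 2^n : ℤ)) : ℝ) = 0 := by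
      rw [key, hd]; simp
    have hc0 : ((2:ℤ)^k * a - 2^k * (2*b) + 2^k * 2^(n+1)) * 2^n = 0 := by exact_mod_cast hcr
    have hc : (2:ℤ)^k * a - 2^k * (2*b) + 2^k * 2^(n+1) = 0 := (mul_eq_zero.mp hc0).resolve_right hNZ
    have h0 : (2:ℤ)^k * ((a:ℤ) - 2*b + 2^(n+1)) = 0 := by ring_nf; ring_nf at hc; linarith
    have h1 : (a:ℤ) - 2*b + 2^(n+1) = 0 := (mul_eq_zero.mp h0).resolve_left hKZ
    have : (2:ℤ)^(n+1) = 2 * 2^n := by ring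
    have ha0 : (0:ℤ) ≤ a := Int.natCast_nonneg a
    linarith
  · -- a right, b left
    have key : ((((2:ℤ)^k * b + 2^k * 2^(n+1) - 2^k * (2*a)) * 2^n : ℤ) : ℝ)
        = ((((2:ℤ)^k * 2^n - z * 2^n) * 2^n : ℤ) : ℝ) * Real.sqrt 2 := by
      push_cast
      field_simp at hz
      linear_combination (-(2:ℝ)^n) * hz + (((a:ℝ) * 2^k - 2^k * 2^n) * 2^n) * hs
    have hd := aux _ _ key
    have hcr : (((((2:ℤ)^k * b + 2^k * 2^(n+1) - 2^k * (2*a)) * 2^n : ℤ)) : ℝ) = 0 := by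
      rw [key, hd]; simp
    have hc0 : ((2:ℤ)^k * b + 2^k * 2^(n+1) - 2^k * (2*a)) * 2^n = 0 := by exact_mod_cast hcr
    have hc : (2:ℤ)^k * b + 2^k * 2^(n+1) - 2^k * (2*a) = 0 := (mul_eq_zero.mp hc0).resolve_right hNZ
    have h0 : (2:ℤ)^k * ((b:ℤ) + 2^(n+1) - 2*a) = 0 := by ring_nf; ring_nf at hc; linarith
    have h1 : (b:ℤ) + 2^(n+1) - 2*a = 0 := (mul_eq_zero.mp h0).resolve_left hKZ
    have : (2:ℤ)^(n+1) = 2 * 2^n := by ring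
    have hb0 : (0:ℤ) ≤ b := Int.natCast_nonneg b
    linarith
  · -- both right
    have key : ((z * 2^n : ℤ) : ℝ) = (((2:ℤ)^k * a - 2^k * b : ℤ) : ℝ) * Real.sqrt 2 := by
      push_cast
      field_simp at hz
      nlinarith [hz, hs]
    have hd := aux _ _ key
    have : (2:ℤ)^k * ((a:ℤ) - b) = 0 := by linarith
    have := (mul_eq_zero.mp this).resolve_left hKZ
    omega
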